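/- Let f : ℝ^d → ℝ be twice continuously differentiable with mI ⪯ ∇²f(x) ⪯ MI for all x. Let P be a symmetric matrix with αI ⪯ P ⪯ βI, α > 0. For any x, y with s = y - x ≠ 0 and q = ∇f(y) - ∇f(x) + P s, it holds that m + α ≤ ‖q‖²/⟨q, s⟩ ≤ M + β. -/

import Mathlib

open InnerProductSpace

lemma ratio_aux {E : Type*} [NormedAddCommGroup E] [InnerProductSpace ℝ E]
    (A : E → E) (a b : ℝ) (ha : 0 < a)
    (hadd : ∀ u v, A (u + v) = A u + A v)
    (hsmul : ∀ (c : ℝ) v, A (c • v) = c • A v)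
    (hsym : ∀ u v, (inner ℝ (A u) v : ℝ) = inner ℝ u (A v))
    (hlow : ∀ v, a * ‖v‖ ^ 2 ≤ inner ℝ v (A v))
    (hup : ∀ v, (inner ℝ v (A v) : ℝ) ≤ b * ‖v‖ ^ 2)
    (s : E) (hs : s ≠ 0) :
    a ≤ ‖A s‖ ^ 2 / inner ℝ (A s) s ∧ ‖A s‖ ^ 2 / (inner ℝ (A s) s : ℝ) ≤ b := by
  have hS : (0:ℝ) < ‖s‖ ^ 2 := by
    have := norm_pos_iff.mpr hs; positivity
  set u := A s with hu
  have hW : (inner ℝ u s : ℝ) = inner ℝ s u := real_inner_comm _ _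
  have hD : (0:ℝ) < inner ℝ u s := by
    rw [hW]; exact lt_of_lt_of_le (by nlinarith [hlow s]) (hlow s)
  have hab : a ≤ b := by
    have h1 := hlow s; have h2 := hup s
    nlinarith
  have hb : (0:ℝ) < b := lt_of_lt_of_le ha hab
  -- C = b•id - A
  set C : E → E := fun v => b • v - A v with hC
  have hCadd : ∀ v w, C (v + w) = C v + C w := by
    intro v w; simp only [hC, hadd, smul_add]; abel
  have hCsmul : ∀ (c : ℝ) v, C (c • v) = c • C v := by
    intro c v
    show b • (c • v) - A (c • v) = c • (b • v - A v)
    rw [hsmul, smul_sub, smul_comm]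
  have hCsym : ∀ v w, (inner ℝ (C v) w : ℝ) = inner ℝ v (C w) := by
    intro v w
    simp only [hC, inner_sub_left, inner_sub_right, real_inner_smul_left,
      real_inner_smul_right, hsym, real_inner_comm v w]
  have hCpos : ∀ v, (0:ℝ) ≤ inner ℝ v (C v) := by
    intro v
    have := hup v
    simp only [hC, inner_sub_right, real_inner_smul_right, real_inner_self_eq_norm_sq]
    linarith
  set w : E := C s with hw
  -- Cauchy-Schwarz for C
  have hCS : (inner ℝ s (C w) : ℝ) ^ 2 ≤ inner ℝ s (C s) * inner ℝ w (C w) := by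
    have hquad : ∀ t : ℝ, 0 ≤ (inner ℝ w (C w) : ℝ) * (t * t) + (2 * inner ℝ s (C w)) * t
        + inner ℝ s (C s) := by
      intro t
      have h0 := hCpos (s + t • w)
      have hexp : (inner ℝ (s + t • w) (C (s + t • w)) : ℝ)
          = (inner ℝ w (C w) : ℝ) * (t * t) + (2 * inner ℝ s (C w)) * t + inner ℝ s (C s) := by
        rw [hCadd, hCsmul]
        simp only [inner_add_left, inner_add_right, real_inner_smul_left,
          real_inner_smul_right]
        have : (inner ℝ w (C s) : ℝ) = inner ℝ s (C w) := by
          rw [real_inner_comm, hCsym]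
        rw [this]; ring
      linarith [hexp ▸ h0]
    have := discrim_le_zero hquad
    rw [discrim] at this
    nlinarith
  have hsCw : (inner ℝ s (C w) : ℝ) = ‖w‖ ^ 2 := by
    rw [← hCsym, ← hw, real_inner_self_eq_norm_sq]
  have hwCw : (inner ℝ w (C w) : ℝ) ≤ b * ‖w‖ ^ 2 := by
    have h1 := hlow w
    simp only [hC, inner_sub_right, real_inner_smul_right, real_inner_self_eq_norm_sq]
    nlinarith
  have hsCs0 : (0:ℝ) ≤ inner ℝ s (C s) := hCpos s
  -- key: ‖w‖² ≤ b * ⟨s, C s⟩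
  have hkey : ‖w‖ ^ 2 ≤ b * inner ℝ s (C s) := by
    rcases eq_or_lt_of_le (sq_nonneg ‖w‖) with h0 | h0
    · rw [← h0]; positivity
    · have : (‖w‖ ^ 2) ^ 2 ≤ inner ℝ s (C s) * (b * ‖w‖ ^ 2) := by
        calc (‖w‖ ^ 2) ^ 2 = (inner ℝ s (C w) : ℝ) ^ 2 := by rw [hsCw]
        _ ≤ inner ℝ s (C s) * inner ℝ w (C w) := hCS
        _ ≤ inner ℝ s (C s) * (b * ‖w‖ ^ 2) := by
            apply mul_le_mul_of_nonneg_left hwCw hsCs0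
      nlinarith
  -- translate to scalars
  have hwsq : ‖w‖ ^ 2 = b ^ 2 * ‖s‖ ^ 2 - 2 * b * inner ℝ s u + ‖u‖ ^ 2 := by
    rw [hw, hC]
    rw [← real_inner_self_eq_norm_sq]
    simp only [inner_sub_left, inner_sub_right, real_inner_smul_left, real_inner_smul_right,
      real_inner_self_eq_norm_sq, real_inner_comm u s, norm_smul, Real.norm_eq_abs,
      mul_pow, sq_abs]
    rw [← hu, real_inner_comm s u]
    ring
  have hsCsval : (inner ℝ s (C s) : ℝ) = b * ‖s‖ ^ 2 - inner ℝ s u := by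
    simp only [hC, inner_sub_right, real_inner_smul_right, real_inner_self_eq_norm_sq]
    rw [← hu]
  have hupper : ‖u‖ ^ 2 ≤ b * inner ℝ u s := by
    rw [hW]; rw [hwsq, hsCsval] at hkey; nlinarith
  -- lower bound
  have hWlow : a * ‖s‖ ^ 2 ≤ (inner ℝ s u : ℝ) := hlow s
  have hnormsub : (0:ℝ) ≤ ‖u‖ ^ 2 - 2 * a * inner ℝ s u + a ^ 2 * ‖s‖ ^ 2 := by
    have h0 : (0:ℝ) ≤ ‖u - a • s‖ ^ 2 := sq_nonneg _
    have : ‖u - a • s‖ ^ 2 = ‖u‖ ^ 2 - 2 * a * inner ℝ s u + a ^ 2 * ‖s‖ ^ 2 := by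
      rw [← real_inner_self_eq_norm_sq]
      simp only [inner_sub_left, inner_sub_right, real_inner_smul_left, real_inner_smul_right,
        real_inner_self_eq_norm_sq, real_inner_comm u s, norm_smul, Real.norm_eq_abs,
        mul_pow, sq_abs]
      ring
    linarith [this ▸ h0]
  have hlower : a * inner ℝ u s ≤ ‖u‖ ^ 2 := by
    rw [hW]; nlinarith
  constructor
  · rw [le_div_iff₀ hD]; linarith [hlower]
  · rw [div_le_iff₀ hD]; linarith [hupper]

/-- Bounds on ‖q‖²/⟨q,s⟩ for q built from gradient differences plus a
symmetric positive definite shift. -/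
theorem qs_ratio_bounds
    {d : ℕ} (f : EuclideanSpace ℝ (Fin d) → ℝ)
    (f' : EuclideanSpace ℝ (Fin d) → EuclideanSpace ℝ (Fin d))
    (hess : EuclideanSpace ℝ (Fin d) →
      (EuclideanSpace ℝ (Fin d) →L[ℝ] EuclideanSpace ℝ (Fin d)))
    (m M : ℝ) (hm : 0 < m) (hmM : m ≤ M)
    (hf : ContDiff ℝ 2 f)
    (hgrad : ∀ x, HasGradientAt f (f' x) x)
    (hhess : ∀ x, HasFDerivAt f' (hess x) x)
    (hhess_sym : ∀ x v w, inner ℝ (hess x v) w = (inner ℝ v (hess x w) : ℝ))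
    (hhess_low : ∀ x v, m * ‖v‖ ^ 2 ≤ inner ℝ v (hess x v))
    (hhess_up : ∀ x v, (inner ℝ v (hess x v) : ℝ) ≤ M * ‖v‖ ^ 2)
    (P : EuclideanSpace ℝ (Fin d) →L[ℝ] EuclideanSpace ℝ (Fin d))
    (α β : ℝ) (hα : 0 < α)
    (hP_sym : ∀ v w, inner ℝ (P v) w = (inner ℝ v (P w) : ℝ))
    (hP_low : ∀ v, α * ‖v‖ ^ 2 ≤ inner ℝ v (P v))
    (hP_up : ∀ v, (inner ℝ v (P v) : ℝ) ≤ β * ‖v‖ ^ 2)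
    (x y : EuclideanSpace ℝ (Fin d)) (s q : EuclideanSpace ℝ (Fin d))
    (hsdef : s = y - x) (hs : s ≠ 0)
    (hqdef : q = f' y - f' x + P s) :
    m + α ≤ ‖q‖ ^ 2 / inner ℝ q s ∧ ‖q‖ ^ 2 / (inner ℝ q s : ℝ) ≤ M + β := by
  -- continuity of the hessian
  have hf'eq : f' = fun z => (InnerProductSpace.toDual ℝ (EuclideanSpace ℝ (Fin d))).symm (fderiv ℝ f z) := by
    funext z
    have h1 : fderiv ℝ f z = InnerProductSpace.toDual ℝ (EuclideanSpace ℝ (Fin d)) (f' z) :=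
      (hgrad z).hasFDerivAt.fderiv
    rw [h1, LinearIsometryEquiv.symm_apply_apply]
  have hf'cd : ContDiff ℝ 1 f' := by
    rw [hf'eq]
    exact (InnerProductSpace.toDual ℝ (EuclideanSpace ℝ (Fin d))).symm.contDiff.comp
      (hf.fderiv_right (by norm_num))
  have hhess_eq : ∀ z, hess z = fderiv ℝ f' z := fun z => (hhess z).fderiv.symm
  have hhessc : Continuous hess := by
    have := hf'cd.continuous_fderiv (by norm_num)
    exact this.congr fun z => (hhess_eq z).symm
  have hHc : Continuous fun t : ℝ => hess (x + t • s) :=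
    hhessc.comp (continuous_const.add (continuous_id.smul continuous_const))
  have hHvc : ∀ v : EuclideanSpace ℝ (Fin d), Continuous fun t : ℝ => hess (x + t • s) v :=
    fun v => hHc.clm_apply continuous_const
  have hint : ∀ v : EuclideanSpace ℝ (Fin d), IntervalIntegrable (fun t : ℝ => hess (x + t • s) v)
      MeasureTheory.volume 0 1 := fun v => (hHvc v).intervalIntegrable 0 1
  -- FTC
  have key : (∫ t in (0:ℝ)..1, hess (x + t • s) s) = f' y - f' x := by
    have hderiv : ∀ t ∈ Set.uIcc (0:ℝ) 1,
        HasDerivAt (fun t : ℝ => f' (x + t • s)) (hess (x + t • s) s) t := by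
      intro t _
      have h2 : HasDerivAt (fun t : ℝ => x + t • s) s t := by
        simpa using ((hasDerivAt_id t).smul_const s).const_add x
      exact (hhess (x + t • s)).comp_hasDerivAt t h2
    have h := intervalIntegral.integral_eq_sub_of_hasDerivAt hderiv (hint s)
    rw [h]
    have hy : x + (1:ℝ) • s = y := by rw [hsdef]; simp
    have hx : x + (0:ℝ) • s = x := by simp
    rw [hy, hx]
  -- the averaged operator
  set A : EuclideanSpace ℝ (Fin d) → EuclideanSpace ℝ (Fin d) := fun v => (∫ t in (0:ℝ)..1, hess (x + t • s) v) + P v with hA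
  have hAs : A s = q := by rw [hA]; dsimp only; rw [key, hqdef]
  have hadd : ∀ u v : EuclideanSpace ℝ (Fin d), A (u + v) = A u + A v := by
    intro u v
    simp only [hA, map_add]
    rw [intervalIntegral.integral_add (hint u) (hint v)]
    abel
  have hsmul : ∀ (c : ℝ) (v : EuclideanSpace ℝ (Fin d)), A (c • v) = c • A v := by
    intro c v
    simp only [hA, map_smul]
    rw [intervalIntegral.integral_smul]
    rw [smul_add]
  have hinner : ∀ u v : EuclideanSpace ℝ (Fin d), (inner ℝ u (A v) : ℝ)
      = (∫ t in (0:ℝ)..1, (inner ℝ u (hess (x + t • s) v) : ℝ)) + inner ℝ u (P v) := by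
    intro u v
    simp only [hA]
    rw [inner_add_right]
    congr 1
    have := (innerSL ℝ u).intervalIntegral_comp_comm (hint v)
    simpa using this.symm
  have hintinner : ∀ u v : EuclideanSpace ℝ (Fin d), IntervalIntegrable
      (fun t : ℝ => (inner ℝ u (hess (x + t • s) v) : ℝ)) MeasureTheory.volume 0 1 :=
    fun u v => (Continuous.inner continuous_const (hHvc v)).intervalIntegrable 0 1
  have hsym : ∀ u v : EuclideanSpace ℝ (Fin d), (inner ℝ (A u) v : ℝ) = inner ℝ u (A v) := by
    intro u v
    rw [real_inner_comm, hinner v u, hinner u v]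
    congr 1
    · apply intervalIntegral.integral_congr
      intro t _
      show (inner ℝ v (hess (x + t • s) u) : ℝ) = inner ℝ u (hess (x + t • s) v)
      rw [← hhess_sym (x + t • s) v u, real_inner_comm]
    · rw [← hP_sym u v, real_inner_comm]
  have hlow : ∀ v : EuclideanSpace ℝ (Fin d), (m + α) * ‖v‖ ^ 2 ≤ inner ℝ v (A v) := by
    intro v
    rw [hinner]
    have h1 : m * ‖v‖ ^ 2 ≤ ∫ t in (0:ℝ)..1, (inner ℝ v (hess (x + t • s) v) : ℝ) := by
      have := intervalIntegral.integral_mono_on (by norm_num : (0:ℝ) ≤ 1)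
        (intervalIntegrable_const (c := m * ‖v‖ ^ 2)) (hintinner v v)
        (fun t _ => hhess_low (x + t • s) v)
      simpa using this
    have h2 := hP_low v
    linarith [h1, h2]
  have hup : ∀ v : EuclideanSpace ℝ (Fin d), (inner ℝ v (A v) : ℝ) ≤ (M + β) * ‖v‖ ^ 2 := by
    intro v
    rw [hinner]
    have h1 : (∫ t in (0:ℝ)..1, (inner ℝ v (hess (x + t • s) v) : ℝ)) ≤ M * ‖v‖ ^ 2 := by
      have := intervalIntegral.integral_mono_on (by norm_num : (0:ℝ) ≤ 1)
        (hintinner v v) (intervalIntegrable_const (c := M * ‖v‖ ^ 2))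
        (fun t _ => hhess_up (x + t • s) v)
      simpa using this
    have h2 := hP_up v
    linarith [h1, h2]
  have := ratio_aux A (m + α) (M + β) (by linarith) hadd hsmul hsym hlow hup s hs
  rwa [hAs] at this
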